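/- Let P be a finite stochastic matrix with Cesàro limit P_*, and let V = (I - P + P_*)^{-1}(I - P_*) r for some vector r. Then P_* V = 0. -/

import Mathlib

open Matrix Filter Finset

/-- A row-stochastic matrix: nonnegative entries and rows summing to 1. -/
def IsStochastic {n : Type*} [Fintype n] (P : Matrix n n ℝ) : Prop :=
  (∀ i j, 0 ≤ P i j) ∧ ∀ i, ∑ j, P i j = 1

/-- `Pstar` is the Cesàro limit of the powers of `P`. -/
def CesaroLimit {n : Type*} [Fintype n] [DecidableEq n] (P Pstar : Matrix n n ℝ) : Prop :=
  Filter.Tendsto (fun H : ℕ => (H : ℝ)⁻¹ • ∑ i ∈ Finset.range H, P ^ i)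
    Filter.atTop (nhds Pstar)

lemma isStochastic_pow {n : Type*} [Fintype n] [DecidableEq n] {P : Matrix n n ℝ}
    (hP : IsStochastic P) (k : ℕ) : IsStochastic (P ^ k) := by
  induction k with
  | zero =>
    refine ⟨fun i j => ?_, fun i => ?_⟩
    · by_cases h : i = j <;> simp [pow_zero, Matrix.one_apply, h]
    · simp [pow_zero, Matrix.one_apply]
  | succ k ih =>
    rw [pow_succ]
    refine ⟨fun i j => ?_, fun i => ?_⟩
    · rw [Matrix.mul_apply]
      exact Finset.sum_nonneg fun l _ => mul_nonneg (ih.1 i l) (hP.1 l j)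
    · simp only [Matrix.mul_apply]
      rw [Finset.sum_comm]
      simp_rw [← Finset.mul_sum, hP.2]
      simpa using ih.2 i

lemma pow_entry_le_one {n : Type*} [Fintype n] [DecidableEq n] {P : Matrix n n ℝ}
    (hP : IsStochastic P) (k : ℕ) (i j : n) : (P ^ k) i j ≤ 1 := by
  have h := isStochastic_pow hP k
  calc (P ^ k) i j ≤ ∑ l, (P ^ k) i l :=
        Finset.single_le_sum (fun l _ => h.1 i l) (Finset.mem_univ j)
    _ = 1 := h.2 i

lemma pstar_mul_p {n : Type*} [Fintype n] [DecidableEq n] {P Pstar : Matrix n n ℝ}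
    (hP : IsStochastic P) (hC : CesaroLimit P Pstar) : Pstar * P = Pstar := by
  set f : ℕ → Matrix n n ℝ := fun H => (H : ℝ)⁻¹ • ∑ i ∈ Finset.range H, P ^ i with hf
  have hcont : Continuous fun M : Matrix n n ℝ => M * P :=
    Continuous.matrix_mul continuous_id continuous_const
  have h1 : Tendsto (fun H => f H * P) atTop (nhds (Pstar * P)) :=
    (hcont.tendsto Pstar).comp hC
  have h2 : Tendsto (fun H => f H * P) atTop (nhds Pstar) := by
    have key : ∀ H : ℕ, f H * P = f H + (H : ℝ)⁻¹ • (P ^ H - 1) := by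
      intro H
      simp only [hf, Matrix.smul_mul, ← smul_add]
      congr 1
      rw [Finset.sum_mul]
      simp_rw [← pow_succ]
      have e1 := Finset.sum_range_succ' (fun i => P ^ i) H
      have e2 := Finset.sum_range_succ (fun i => P ^ i) H
      simp only [pow_zero] at e1
      have : ∑ i ∈ Finset.range H, P ^ (i + 1) + 1
          = ∑ i ∈ Finset.range H, P ^ i + P ^ H := by rw [← e1, e2]
      linear_combination (norm := abel) this
    simp_rw [key]
    have hz : Tendsto (fun H : ℕ => (H : ℝ)⁻¹ • (P ^ H - 1)) atTop
        (nhds (0 : Matrix n n ℝ)) := by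
      apply tendsto_pi_nhds.mpr
      intro i
      rw [tendsto_pi_nhds]
      intro j
      have hb : ∀ H : ℕ, ‖((H : ℝ)⁻¹ • (P ^ H - 1)) i j‖ ≤ 2 * (H : ℝ)⁻¹ := by
        intro H
        have h1' : (0:ℝ) ≤ (P ^ H) i j := (isStochastic_pow hP H).1 i j
        have h2' : (P ^ H) i j ≤ 1 := pow_entry_le_one hP H i j
        have h3 : (0:ℝ) ≤ (1 : Matrix n n ℝ) i j := by
          by_cases h : i = j <;> simp [Matrix.one_apply, h]
        have h4 : (1 : Matrix n n ℝ) i j ≤ 1 := by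
          by_cases h : i = j <;> simp [Matrix.one_apply, h]
        have habs : |(P ^ H - 1) i j| ≤ 2 := by
          rw [Matrix.sub_apply, abs_le]; constructor <;> linarith
        calc ‖((H : ℝ)⁻¹ • (P ^ H - 1)) i j‖
            = (H : ℝ)⁻¹ * |(P ^ H - 1) i j| := by
              simp only [Matrix.smul_apply, smul_eq_mul, norm_mul, Real.norm_eq_abs]
              rw [abs_of_nonneg (by positivity)]
          _ ≤ (H : ℝ)⁻¹ * 2 := by
              have : (0:ℝ) ≤ (H : ℝ)⁻¹ := by positivity
              nlinarith
          _ = 2 * (H : ℝ)⁻¹ := mul_comm _ _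
      refine squeeze_zero_norm hb ?_
      have : Tendsto (fun H : ℕ => (H : ℝ)⁻¹) atTop (nhds 0) :=
        tendsto_inv_atTop_zero.comp tendsto_natCast_atTop_atTop
      simpa using this.const_mul 2
    have := hC.add hz
    simpa using this
  exact tendsto_nhds_unique h1 h2

lemma pstar_idem {n : Type*} [Fintype n] [DecidableEq n] {P Pstar : Matrix n n ℝ}
    (hP : IsStochastic P) (hC : CesaroLimit P Pstar) : Pstar * Pstar = Pstar := by
  have hpow : ∀ k : ℕ, Pstar * P ^ k = Pstar := by
    intro k
    induction k with
    | zero => simp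
    | succ k ih => rw [pow_succ, ← Matrix.mul_assoc, ih, pstar_mul_p hP hC]
  have hcont : Continuous fun M : Matrix n n ℝ => Pstar * M :=
    Continuous.matrix_mul continuous_const continuous_id
  have h1 : Tendsto (fun H : ℕ => Pstar * ((H : ℝ)⁻¹ • ∑ i ∈ Finset.range H, P ^ i))
      atTop (nhds (Pstar * Pstar)) := (hcont.tendsto Pstar).comp hC
  have h2 : Tendsto (fun H : ℕ => Pstar * ((H : ℝ)⁻¹ • ∑ i ∈ Finset.range H, P ^ i))
      atTop (nhds Pstar) := by
    have hev : (fun H : ℕ => Pstar * ((H : ℝ)⁻¹ • ∑ i ∈ Finset.range H, P ^ i))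
        =ᶠ[atTop] fun _ => Pstar := by
      filter_upwards [eventually_gt_atTop 0] with H hH
      rw [Matrix.mul_smul, Matrix.mul_sum]
      simp_rw [hpow]
      rw [Finset.sum_const, Finset.card_range]
      rw [smul_comm, ← Nat.cast_smul_eq_nsmul ℝ, smul_smul,
        mul_inv_cancel₀ (by exact_mod_cast hH.ne'), one_smul]
    exact Tendsto.congr' hev.symm tendsto_const_nhds
  exact tendsto_nhds_unique h1 h2

theorem cesaro_bias_orthogonal {n : Type*} [Fintype n] [DecidableEq n]
    (P Pstar : Matrix n n ℝ) (hP : IsStochastic P) (hC : CesaroLimit P Pstar)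
    (r V : n → ℝ)
    (hV : V = (1 - P + Pstar)⁻¹ *ᵥ ((1 - Pstar) *ᵥ r)) :
    Pstar *ᵥ V = 0 := by
  set A : Matrix n n ℝ := 1 - P + Pstar with hA
  by_cases hu : IsUnit A.det
  · have hPA : Pstar * A = Pstar := by
      rw [hA, Matrix.mul_add, Matrix.mul_sub, Matrix.mul_one,
        pstar_mul_p hP hC, pstar_idem hP hC]
      abel
    have hPAinv : Pstar * A⁻¹ = Pstar := by
      calc Pstar * A⁻¹ = (Pstar * A) * A⁻¹ := by rw [hPA]
        _ = Pstar * (A * A⁻¹) := by rw [Matrix.mul_assoc]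
        _ = Pstar := by rw [Matrix.mul_nonsing_inv _ hu, Matrix.mul_one]
    rw [hV, Matrix.mulVec_mulVec, Matrix.mulVec_mulVec, hPAinv,
      Matrix.mul_sub, Matrix.mul_one, pstar_idem hP hC, sub_self, Matrix.zero_mulVec]
  · rw [hV, Matrix.nonsing_inv_apply_not_isUnit _ hu, Matrix.zero_mulVec, Matrix.mulVec_zero]
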